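/- Let (g,[2]_g) be a restricted Lie algebra over F, let h be an F-vector space regarded as a strongly abelian restricted Lie algebra (zero bracket, zero 2-mapping), let D_g be a restricted derivation of (g,[2]_g), and let D_h : h → h be F-linear. Then the following are equivalent: (i) the pair (D_h, D_g) is extensible in every central extension of (g,[2]_g) by h, i.e. for every central extension θ : ĝ → g of restricted Lie algebras with kernel h ([h,ĝ] = 0 and u^[2]_ĝ = 0 for u ∈ h) there exists a restricted derivation D_ĝ of (ĝ,[2]_ĝ) with D_ĝ(u) = D_h(u) for all u ∈ h and θ∘D_ĝ = D_g∘θ; (ii) Φ(D_h,D_g) = 0 on cohomology, i.e. for every 2-cocycle (ψ,ς) of (g,[2]_g) with values in the trivial module h, the 2-cochain (ψ',ς') defined by ψ'(x,y) = D_h(ψ(x,y)) + ψ(D_g(x),y) + ψ(x,D_g(y)) and ς'(x) = D_h(ς(x)) + ψ(x,D_g(x)) is a 2-coboundary: there exists an F-linear map λ : g → h with ψ'(x,y) = λ([x,y]) and ς'(x) = λ(x^[2]_g) for all x,y ∈ g. -/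

import Mathlib

universe u v

section Char2Aux

variable {F : Type v} [Field F] [CharP F 2]

lemma char2_add_self' {M : Type*} [AddCommGroup M] [Module F M] (v : M) : v + v = 0 := by
  have h2 : (2 : F) = 0 := by exact_mod_cast CharP.cast_eq_zero F 2
  calc v + v = (2 : F) • v := (two_smul F v).symm
    _ = 0 := by rw [h2, zero_smul]

lemma char2_neg' {M : Type*} [AddCommGroup M] [Module F M] (v : M) : -v = v :=
  neg_eq_of_add_eq_zero_left (char2_add_self' (F := F) v)

lemma char2_eq_of_add_eq_zero' {M : Type*} [AddCommGroup M] [Module F M] {a b : M}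
    (hab : a + b = 0) : a = b := by
  have h := neg_eq_of_add_eq_zero_left hab
  rw [char2_neg' (F := F)] at h
  exact h.symm

lemma char2_lie_comm {L : Type*} [LieRing L] [LieAlgebra F L] (x y : L) :
    ⁅x, y⁆ = ⁅y, x⁆ := by
  have h : ⁅x, y⁆ + ⁅y, x⁆ = 0 := by
    rw [← lie_skew (x := x) (y := y)]
    exact neg_add_cancel _
  exact char2_eq_of_add_eq_zero' (F := F) h

lemma char2_cancel_left {M : Type*} [AddCommGroup M] [Module F M] (a b : M) :
    a + (a + b) = b := by
  rw [← add_assoc, char2_add_self' (F := F), zero_add]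

end Char2Aux

/-- a pair `(D_h, D_g)` is extensible in every central extension of the
restricted Lie algebra `(g,[2])` by the strongly abelian restricted Lie algebra `h` if
and only if the induced operator `Φ(D_h, D_g)` vanishes on the second restricted
cohomology with trivial coefficients, i.e. the image of every 2-cocycle is a
2-coboundary. -/
theorem stmt19
    {F : Type v} [Field F] [CharP F 2]
    {g : Type u} [LieRing g] [LieAlgebra F g]
    {h : Type u} [AddCommGroup h] [Module F h]
    -- restricted structure on g
    (sqg : g → g)
    (hsqg_ad : ∀ x y : g, ⁅sqg x, y⁆ = ⁅x, ⁅x, y⁆⁆)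
    (hsqg_smul : ∀ (a : F) (x : g), sqg (a • x) = a ^ 2 • sqg x)
    (hsqg_add : ∀ x y : g, sqg (x + y) = sqg x + sqg y + ⁅x, y⁆)
    -- a restricted derivation of g
    (Dg : g →ₗ[F] g)
    (hDg_br : ∀ x y : g, Dg ⁅x, y⁆ = ⁅Dg x, y⁆ + ⁅x, Dg y⁆)
    (hDg_sq : ∀ x : g, Dg (sqg x) = ⁅x, Dg x⁆)
    -- a linear map on h
    (Dh : h →ₗ[F] h) :
    -- (i) (D_h, D_g) is extensible in every central extension of g by h:
    ((∀ (gh : Type u) (_ : LieRing gh) (_ : LieAlgebra F gh)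
        (sqgh : gh → gh),
        (∀ u v : gh, ⁅sqgh u, v⁆ = ⁅u, ⁅u, v⁆⁆) →
        (∀ (a : F) (u : gh), sqgh (a • u) = a ^ 2 • sqgh u) →
        (∀ u v : gh, sqgh (u + v) = sqgh u + sqgh v + ⁅u, v⁆) →
        ∀ (θ : gh →ₗ⁅F⁆ g) (i : h →ₗ[F] gh),
          Function.Surjective θ →
          Function.Injective i →
          (∀ u : gh, θ u = 0 ↔ ∃ a : h, i a = u) →
          (∀ (a : h) (v : gh), ⁅i a, v⁆ = 0) →
          (∀ a : h, sqgh (i a) = 0) →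
          (∀ u : gh, θ (sqgh u) = sqg (θ u)) →
          ∃ Dgh : gh →ₗ[F] gh,
            (∀ u v : gh, Dgh ⁅u, v⁆ = ⁅Dgh u, v⁆ + ⁅u, Dgh v⁆) ∧
            (∀ u : gh, Dgh (sqgh u) = ⁅u, Dgh u⁆) ∧
            (∀ a : h, Dgh (i a) = i (Dh a)) ∧
            (∀ u : gh, θ (Dgh u) = Dg (θ u))) ↔
      -- (ii) Φ(D_h, D_g) = 0 on cohomology:
      (∀ (ψ : g → g → h) (ς : g → h),
        (∀ (a : F) (x x' y : g), ψ (a • x + x') y = a • ψ x y + ψ x' y) →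
        (∀ (a : F) (x y y' : g), ψ x (a • y + y') = a • ψ x y + ψ x y') →
        (∀ x : g, ψ x x = 0) →
        (∀ (a : F) (x : g), ς (a • x) = a ^ 2 • ς x) →
        (∀ x y : g, ς (x + y) = ς x + ς y + ψ x y) →
        (∀ x y z : g, ψ x ⁅y, z⁆ + ψ y ⁅z, x⁆ + ψ z ⁅x, y⁆ = 0) →
        (∀ x y : g, ψ (sqg x) y + ψ ⁅x, y⁆ x = 0) →
        ∃ lam : g →ₗ[F] h,
          (∀ x y : g, Dh (ψ x y) + ψ (Dg x) y + ψ x (Dg y) = lam ⁅x, y⁆) ∧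
          (∀ x : g, Dh (ς x) + ψ x (Dg x) = lam (sqg x)))) := by
  constructor
  · -- (i) → (ii)
    intro H ψ ς hψl hψr hψalt hςsm hςadd hjac hsqc
    -- basic consequences of the cocycle axioms
    have hψadd_l : ∀ x x' y : g, ψ (x + x') y = ψ x y + ψ x' y := by
      intro x x' y
      have := hψl 1 x x' y
      simpa using this
    have hψadd_r : ∀ x y y' : g, ψ x (y + y') = ψ x y + ψ x y' := by
      intro x y y'
      have := hψr 1 x y y'
      simpa using this
    have hψ0l : ∀ y : g, ψ 0 y = 0 := by
      intro y
      have hh := hψadd_l 0 0 y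
      rw [add_zero] at hh
      have h2 : ψ 0 y + ψ 0 y = ψ 0 y + 0 := by rw [add_zero]; exact hh.symm
      exact add_left_cancel h2
    have hψ0r : ∀ x : g, ψ x 0 = 0 := by
      intro x
      have hh := hψadd_r x 0 0
      rw [add_zero] at hh
      have h2 : ψ x 0 + ψ x 0 = ψ x 0 + 0 := by rw [add_zero]; exact hh.symm
      exact add_left_cancel h2
    have hψsmul_l : ∀ (a : F) (x y : g), ψ (a • x) y = a • ψ x y := by
      intro a x y
      have := hψl a x 0 y
      simpa [hψ0l] using this
    have hψsmul_r : ∀ (a : F) (x y : g), ψ x (a • y) = a • ψ x y := by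
      intro a x y
      have := hψr a x y 0
      simpa [hψ0r] using this
    have hψswap : ∀ x y : g, ψ y x = ψ x y := by
      intro x y
      have h1 := hψalt (x + y)
      rw [hψadd_l, hψadd_r, hψadd_r, hψalt, hψalt, zero_add, add_zero] at h1
      have h2 := neg_eq_of_add_eq_zero_left h1
      rwa [char2_neg' (F := F)] at h2
    have hς0 : ς 0 = 0 := by
      have hh := hςadd 0 0
      rw [add_zero, hψ0l, add_zero] at hh
      have h2 : ς 0 + ς 0 = ς 0 + 0 := by rw [add_zero]; exact hh.symm
      exact add_left_cancel h2
    have hsqg0 : sqg 0 = 0 := by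
      have := hsqg_smul 0 0
      simpa using this
    have had : ∀ x y : g, ψ (sqg x) y = ψ x ⁅x, y⁆ := by
      intro x y
      have h2 := char2_eq_of_add_eq_zero' (F := F) (hsqc x y)
      rw [h2, hψswap]
    have hleib : ∀ x y z : g, ψ x ⁅y, z⁆ = ψ ⁅x, y⁆ z + ψ y ⁅x, z⁆ := by
      intro x y z
      have h1 : ψ x ⁅y, z⁆ + (ψ y ⁅z, x⁆ + ψ z ⁅x, y⁆) = 0 := by
        rw [← add_assoc]; exact hjac x y z
      have h2 := char2_eq_of_add_eq_zero' (F := F) h1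
      rw [h2, hψswap ⁅x, y⁆ z, char2_lie_comm (F := F) z x, add_comm]
    -- the central extension h ⊕ g twisted by (ψ, ς)
    letI LR : LieRing (h × g) :=
      { (inferInstance : AddCommGroup (h × g)) with
        bracket := fun p q => (ψ p.2 q.2, ⁅p.2, q.2⁆)
        add_lie := by
          intro p q r
          show (ψ (p.2 + q.2) r.2, ⁅p.2 + q.2, r.2⁆)
              = (ψ p.2 r.2, ⁅p.2, r.2⁆) + (ψ q.2 r.2, ⁅q.2, r.2⁆)
          rw [Prod.mk_add_mk]
          exact Prod.ext (hψadd_l _ _ _) (add_lie _ _ _)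
        lie_add := by
          intro p q r
          show (ψ p.2 (q.2 + r.2), ⁅p.2, q.2 + r.2⁆)
              = (ψ p.2 q.2, ⁅p.2, q.2⁆) + (ψ p.2 r.2, ⁅p.2, r.2⁆)
          rw [Prod.mk_add_mk]
          exact Prod.ext (hψadd_r _ _ _) (lie_add _ _ _)
        lie_self := by
          intro p
          show (ψ p.2 p.2, ⁅p.2, p.2⁆) = 0
          rw [hψalt, lie_self]; rfl
        leibniz_lie := by
          intro p q r
          show (ψ p.2 ⁅q.2, r.2⁆, ⁅p.2, ⁅q.2, r.2⁆⁆)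
              = (ψ ⁅p.2, q.2⁆ r.2, ⁅⁅p.2, q.2⁆, r.2⁆) + (ψ q.2 ⁅p.2, r.2⁆, ⁅q.2, ⁅p.2, r.2⁆⁆)
          rw [Prod.mk_add_mk]
          exact Prod.ext (hleib _ _ _) (leibniz_lie _ _ _) }
    letI LA : LieAlgebra F (h × g) :=
      { (inferInstance : Module F (h × g)) with
        lie_smul := by
          intro t p q
          show (ψ p.2 (t • q).2, ⁅p.2, (t • q).2⁆) = t • (ψ p.2 q.2, ⁅p.2, q.2⁆)
          rw [Prod.smul_mk]
          exact Prod.ext (hψsmul_r _ _ _) (lie_smul _ _ _) }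
    let sq : h × g → h × g := fun p => (ς p.2, sqg p.2)
    let θ : (h × g) →ₗ⁅F⁆ g := { LinearMap.snd F h g with map_lie' := rfl }
    let i : h →ₗ[F] (h × g) := LinearMap.inl F h g
    obtain ⟨Dgh, hbr, hsqd, hiD, hθD⟩ :=
      H (h × g) LR LA sq
        (by
          intro p q
          show (ψ (sqg p.2) q.2, ⁅sqg p.2, q.2⁆) = (ψ p.2 ⁅p.2, q.2⁆, ⁅p.2, ⁅p.2, q.2⁆⁆)
          exact Prod.ext (had _ _) (hsqg_ad _ _))
        (by
          intro a p
          show (ς (a • p).2, sqg (a • p).2) = a ^ 2 • (ς p.2, sqg p.2)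
          rw [Prod.smul_mk]
          exact Prod.ext (hςsm _ _) (hsqg_smul _ _))
        (by
          intro p q
          show (ς (p.2 + q.2), sqg (p.2 + q.2))
              = (ς p.2, sqg p.2) + (ς q.2, sqg q.2) + (ψ p.2 q.2, ⁅p.2, q.2⁆)
          rw [Prod.mk_add_mk, Prod.mk_add_mk]
          exact Prod.ext (hςadd _ _) (hsqg_add _ _))
        θ i
        (fun x => ⟨((0 : h), x), rfl⟩)
        (fun a b hab => congrArg Prod.fst hab)
        (by
          intro u
          constructor
          · intro hu
            exact ⟨u.1, Prod.ext rfl hu.symm⟩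
          · rintro ⟨a, rfl⟩
            rfl)
        (by
          intro a p
          show (ψ ((0 : g)) p.2, ⁅(0 : g), p.2⁆) = 0
          rw [hψ0l, zero_lie]; rfl)
        (by
          intro a
          show (ς 0, sqg 0) = 0
          rw [hς0, hsqg0]; rfl)
        (fun u => rfl)
    -- extract the linear map lam
    have hD2 : ∀ p : h × g, (Dgh p).2 = Dg p.2 := fun p => hθD p
    have hDpair : ∀ (a : h) (x : g), Dgh (a, x) = (Dh a + (Dgh (0, x)).1, Dg x) := by
      intro a x
      have h1 : ((a, x) : h × g) = i a + (0, x) := by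
        show ((a, x) : h × g) = (a, 0) + (0, x)
        rw [Prod.mk_add_mk, add_zero, zero_add]
      rw [h1, map_add, hiD]
      refine Prod.ext ?_ ?_
      · show Dh a + (Dgh (0, x)).1 = Dh a + (Dgh (0, x)).1
        rfl
      · show (0 : g) + (Dgh (0, x)).2 = Dg x
        rw [zero_add, hD2]
    let lam : g →ₗ[F] h :=
      { toFun := fun x => (Dgh (0, x)).1
        map_add' := by
          intro x y
          show (Dgh ((0 : h), x + y)).1 = (Dgh ((0 : h), x)).1 + (Dgh ((0 : h), y)).1
          have h1 : ((0 : h), x + y) = ((0 : h), x) + ((0 : h), y) := by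
            rw [Prod.mk_add_mk, add_zero]
          rw [h1, map_add]
          rfl
        map_smul' := by
          intro a x
          show (Dgh ((0 : h), a • x)).1 = a • (Dgh ((0 : h), x)).1
          have h1 : ((0 : h), a • x) = a • ((0 : h), x) := by
            rw [Prod.smul_mk, smul_zero]
          rw [h1, map_smul]
          rfl }
    refine ⟨lam, ?_, ?_⟩
    · intro x y
      have e0 := hbr ((0 : h), x) ((0 : h), y)
      have e1 : Dgh ⁅((0 : h), x), ((0 : h), y)⁆ = (Dh (ψ x y) + lam ⁅x, y⁆, Dg ⁅x, y⁆) := by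
        show Dgh (ψ x y, ⁅x, y⁆) = _
        rw [hDpair]
        rfl
      have e2 : ⁅Dgh ((0 : h), x), ((0 : h), y)⁆ = (ψ (Dg x) y, ⁅Dg x, y⁆) := by
        show (ψ (Dgh ((0 : h), x)).2 y, ⁅(Dgh ((0 : h), x)).2, y⁆) = _
        rw [hD2]
      have e3 : ⁅((0 : h), x), Dgh ((0 : h), y)⁆ = (ψ x (Dg y), ⁅x, Dg y⁆) := by
        show (ψ x (Dgh ((0 : h), y)).2, ⁅x, (Dgh ((0 : h), y)).2⁆) = _
        rw [hD2]
      rw [e1, e2, e3, Prod.mk_add_mk] at e0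
      have e4 : Dh (ψ x y) + lam ⁅x, y⁆ = ψ (Dg x) y + ψ x (Dg y) :=
        congrArg Prod.fst e0
      calc Dh (ψ x y) + ψ (Dg x) y + ψ x (Dg y)
          = Dh (ψ x y) + (ψ (Dg x) y + ψ x (Dg y)) := by rw [add_assoc]
        _ = Dh (ψ x y) + (Dh (ψ x y) + lam ⁅x, y⁆) := by rw [e4]
        _ = lam ⁅x, y⁆ := char2_cancel_left (F := F) _ _
    · intro x
      have e0 := hsqd ((0 : h), x)
      have e1 : Dgh (sq ((0 : h), x)) = (Dh (ς x) + lam (sqg x), Dg (sqg x)) := by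
        show Dgh (ς x, sqg x) = _
        rw [hDpair]
        rfl
      have e2 : ⁅((0 : h), x), Dgh ((0 : h), x)⁆ = (ψ x (Dg x), ⁅x, Dg x⁆) := by
        show (ψ x (Dgh ((0 : h), x)).2, ⁅x, (Dgh ((0 : h), x)).2⁆) = _
        rw [hD2]
      rw [e1, e2] at e0
      have e4 : Dh (ς x) + lam (sqg x) = ψ x (Dg x) := congrArg Prod.fst e0
      calc Dh (ς x) + ψ x (Dg x)
          = Dh (ς x) + (Dh (ς x) + lam (sqg x)) := by rw [e4]
        _ = lam (sqg x) := char2_cancel_left (F := F) _ _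
  · -- (ii) → (i)
    intro H gh _ _ sqgh hsq_ad hsq_smul hsq_add θ i hsurj hinj hker hcent hsqz hθsq
    obtain ⟨s, hs⟩ := LinearMap.exists_rightInverse_of_surjective θ.toLinearMap
      (LinearMap.range_eq_top.mpr (by
        intro x
        obtain ⟨u, hu⟩ := hsurj x
        exact ⟨u, hu⟩))
    obtain ⟨j, hj⟩ := LinearMap.exists_leftInverse_of_injective i
      (LinearMap.ker_eq_bot.mpr hinj)
    have hθs : ∀ x : g, θ (s x) = x := by
      intro x
      have := LinearMap.congr_fun hs x
      simpa using this
    have hji : ∀ a : h, j (i a) = a := by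
      intro a
      have := LinearMap.congr_fun hj a
      simpa using this
    have hθi : ∀ a : h, θ (i a) = 0 := fun a => (hker (i a)).mpr ⟨a, rfl⟩
    have hij : ∀ w : gh, θ w = 0 → i (j w) = w := by
      intro w hw
      obtain ⟨a, rfl⟩ := (hker w).mp hw
      rw [hji]
    have hcent' : ∀ (a : h) (v : gh), ⁅v, i a⁆ = 0 := by
      intro a v
      rw [← lie_skew, hcent, neg_zero]
    have hdec : ∀ u : gh, u = s (θ u) + i (j (u - s (θ u))) := by
      intro u
      rw [hij (u - s (θ u)) (by rw [map_sub, hθs, sub_self])]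
      abel
    -- the cocycle attached to the extension
    set ψ : g → g → h := fun x y => j (⁅s x, s y⁆ - s ⁅x, y⁆) with hψdef
    set ς : g → h := fun x => j (sqgh (s x) - s (sqg x)) with hςdef
    have hiψ : ∀ x y : g, i (ψ x y) = ⁅s x, s y⁆ - s ⁅x, y⁆ := by
      intro x y
      apply hij
      rw [map_sub, θ.map_lie, hθs, hθs, hθs, sub_self]
    have hiς : ∀ x : g, i (ς x) = sqgh (s x) - s (sqg x) := by
      intro x
      apply hij
      rw [map_sub, hθsq, hθs, hθs, sub_self]
    have hsψ : ∀ x y : g, s ⁅x, y⁆ = ⁅s x, s y⁆ - i (ψ x y) := by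
      intro x y; rw [hiψ]; abel
    have hsς : ∀ x : g, s (sqg x) = sqgh (s x) - i (ς x) := by
      intro x; rw [hiς]; abel
    have hbrf : ∀ u v : gh, ⁅u, v⁆ = ⁅s (θ u), s (θ v)⁆ := by
      intro u v
      conv_lhs => rw [hdec u, hdec v]
      rw [add_lie, lie_add, lie_add, hcent, hcent', hcent']
      simp
    have hbr2 : ∀ u v : gh, ⁅u, v⁆ = s ⁅θ u, θ v⁆ + i (ψ (θ u) (θ v)) := by
      intro u v
      rw [hbrf u v, hiψ]
      abel
    have hsqf : ∀ u : gh, sqgh u = s (sqg (θ u)) + i (ς (θ u)) := by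
      intro u
      conv_lhs => rw [hdec u]
      rw [hsq_add, hsqz, hcent', add_zero, add_zero, hsς]
      abel
    -- verify the cocycle axioms
    have hψl : ∀ (a : F) (x x' y : g), ψ (a • x + x') y = a • ψ x y + ψ x' y := by
      intro a x x' y
      apply hinj
      rw [map_add, map_smul, hiψ, hiψ, hiψ]
      have hb : (⁅a • x + x', y⁆ : g) = a • ⁅x, y⁆ + ⁅x', y⁆ := by
        rw [add_lie, smul_lie]
      rw [hb, map_add, map_smul, map_add, map_smul, add_lie, smul_lie, smul_sub]
      abel
    have hψr : ∀ (a : F) (x y y' : g), ψ x (a • y + y') = a • ψ x y + ψ x y' := by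
      intro a x y y'
      apply hinj
      rw [map_add, map_smul, hiψ, hiψ, hiψ]
      have hb : (⁅x, a • y + y'⁆ : g) = a • ⁅x, y⁆ + ⁅x, y'⁆ := by
        rw [lie_add, lie_smul]
      rw [hb, map_add, map_smul, map_add, map_smul, lie_add, lie_smul, smul_sub]
      abel
    have hψalt : ∀ x : g, ψ x x = 0 := by
      intro x
      apply hinj
      rw [hiψ, map_zero, lie_self, lie_self, map_zero, sub_zero]
    have hςsm : ∀ (a : F) (x : g), ς (a • x) = a ^ 2 • ς x := by
      intro a x
      apply hinj
      rw [map_smul, hiς, hiς, map_smul, hsq_smul, hsqg_smul, map_smul, smul_sub]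
    have hςadd : ∀ x y : g, ς (x + y) = ς x + ς y + ψ x y := by
      intro x y
      apply hinj
      rw [map_add, map_add, hiς, hiς, hiς, hiψ, map_add, hsq_add, hsqg_add,
        map_add, map_add]
      abel
    have hjac : ∀ x y z : g, ψ x ⁅y, z⁆ + ψ y ⁅z, x⁆ + ψ z ⁅x, y⁆ = 0 := by
      have key : ∀ x y z : g, i (ψ x ⁅y, z⁆) = ⁅s x, ⁅s y, s z⁆⁆ - s ⁅x, ⁅y, z⁆⁆ := by
        intro x y z
        rw [hiψ]
        congr 1
        rw [hsψ y z, lie_sub, hcent', sub_zero]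
      intro x y z
      apply hinj
      rw [map_add, map_add, map_zero, key, key, key]
      have hA := lie_jacobi (s x) (s y) (s z)
      have hB : s ⁅x, ⁅y, z⁆⁆ + s ⁅y, ⁅z, x⁆⁆ + s ⁅z, ⁅x, y⁆⁆ = 0 := by
        rw [← map_add, ← map_add, lie_jacobi, map_zero]
      calc (⁅s x, ⁅s y, s z⁆⁆ - s ⁅x, ⁅y, z⁆⁆) + (⁅s y, ⁅s z, s x⁆⁆ - s ⁅y, ⁅z, x⁆⁆)
            + (⁅s z, ⁅s x, s y⁆⁆ - s ⁅z, ⁅x, y⁆⁆)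
          = (⁅s x, ⁅s y, s z⁆⁆ + ⁅s y, ⁅s z, s x⁆⁆ + ⁅s z, ⁅s x, s y⁆⁆)
            - (s ⁅x, ⁅y, z⁆⁆ + s ⁅y, ⁅z, x⁆⁆ + s ⁅z, ⁅x, y⁆⁆) := by abel
        _ = 0 := by rw [hA, hB, sub_zero]
    have hsqc : ∀ x y : g, ψ (sqg x) y + ψ ⁅x, y⁆ x = 0 := by
      intro x y
      apply hinj
      rw [map_add, map_zero, hiψ, hiψ]
      rw [hsς x, hsψ x y, sub_lie, hcent, sub_zero, sub_lie, hcent, sub_zero, hsq_ad]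
      have h3 : ⁅⁅s x, s y⁆, s x⁆ = -⁅s x, ⁅s x, s y⁆⁆ := (lie_skew _ _).symm
      have h4 : (⁅sqg x, y⁆ : g) = ⁅x, ⁅x, y⁆⁆ := hsqg_ad x y
      have h5 : (⁅⁅x, y⁆, x⁆ : g) = -⁅x, ⁅x, y⁆⁆ := (lie_skew _ _).symm
      rw [h3, h4, h5, map_neg]
      abel
    obtain ⟨lam, hlam1, hlam2⟩ := H ψ ς hψl hψr hψalt hςsm hςadd hjac hsqc
    -- construct the derivation on the extension
    let D : gh →ₗ[F] gh :=
      s ∘ₗ (Dg ∘ₗ θ.toLinearMap)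
        + i ∘ₗ ((Dh ∘ₗ (j ∘ₗ (LinearMap.id - s ∘ₗ θ.toLinearMap))) + lam ∘ₗ θ.toLinearMap)
    have hD : ∀ u : gh, D u = s (Dg (θ u)) + i (Dh (j (u - s (θ u))) + lam (θ u)) :=
      fun u => rfl
    have hDθ : ∀ u : gh, θ (D u) = Dg (θ u) := by
      intro u
      rw [hD u, map_add, hθs, hθi, add_zero]
    refine ⟨D, ?_, ?_, ?_, hDθ⟩
    · -- bracket compatibility
      intro u v
      have l1 : θ ⁅u, v⁆ = ⁅θ u, θ v⁆ := θ.map_lie u v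
      have l2 : ⁅u, v⁆ - s ⁅θ u, θ v⁆ = i (ψ (θ u) (θ v)) := by
        rw [hbr2 u v]; abel
      have hi2 : i (Dh (ψ (θ u) (θ v)) + lam ⁅θ u, θ v⁆)
          = i (ψ (Dg (θ u)) (θ v)) + i (ψ (θ u) (Dg (θ v))) := by
        rw [← map_add]
        congr 1
        rw [← hlam1 (θ u) (θ v)]
        calc Dh (ψ (θ u) (θ v)) + (Dh (ψ (θ u) (θ v)) + ψ (Dg (θ u)) (θ v) + ψ (θ u) (Dg (θ v)))
            = Dh (ψ (θ u) (θ v)) + (Dh (ψ (θ u) (θ v))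
              + (ψ (Dg (θ u)) (θ v) + ψ (θ u) (Dg (θ v)))) := by abel
          _ = ψ (Dg (θ u)) (θ v) + ψ (θ u) (Dg (θ v)) := char2_cancel_left (F := F) _ _
      rw [hbr2 (D u) v, hbr2 u (D v), hDθ u, hDθ v, hD ⁅u, v⁆, l1, l2, hji, hi2,
        hDg_br, map_add]
      abel
    · -- squaring compatibility
      intro u
      have l1 : θ (sqgh u) = sqg (θ u) := hθsq u
      have l2 : sqgh u - s (sqg (θ u)) = i (ς (θ u)) := by
        rw [hsqf u]; abel
      have l3 : Dh (ς (θ u)) + lam (sqg (θ u)) = ψ (θ u) (Dg (θ u)) := by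
        rw [← hlam2 (θ u)]
        exact char2_cancel_left (F := F) _ _
      rw [hbr2 u (D u), hDθ u, hD (sqgh u), l1, l2, hji, l3, hDg_sq]
    · -- compatibility with i
      intro a
      rw [hD (i a)]
      simp only [hθi, map_zero, sub_zero, hji, add_zero, zero_add]
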